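/- Let X be a Banach space, T a bounded linear operator on X, and Y a closed subspace of X. The following two conditions together: (i) T restricted to Y is an isomorphism onto its image (bounded below on Y), and (ii) d(Y, T(Y)) > 0, are equivalent to the existence of a constant c > 0 such that d(Ty, Y) ≥ c for all y in the unit sphere of Y. -/

import Mathlib

/-- The distance `d(X,Y) = inf {‖x - y‖ : x ∈ S_X, y ∈ Y}` between subspaces. -/
noncomputable def subspaceDist {Z : Type*} [NormedAddCommGroup Z] [NormedSpace ℂ Z]
    (X Y : Submodule ℂ Z) : ℝ :=
  sInf {r : ℝ | ∃ x ∈ X, ‖x‖ = 1 ∧ ∃ y ∈ Y, r = ‖x - y‖}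

private lemma my_le_infDist {X' : Type*} [MetricSpace X'] {b : ℝ} {x : X'} {s : Set X'}
    (hs : s.Nonempty) (h : ∀ y ∈ s, b ≤ dist x y) : b ≤ Metric.infDist x s := by
  by_contra hlt
  push_neg at hlt
  obtain ⟨y, hy, hdy⟩ := (Metric.infDist_lt_iff hs).mp hlt
  exact absurd (h y hy) (not_le.mpr hdy)

/-- `T` bounded below on `Y` together with `d(Y, T(Y)) > 0` is equivalent to the existence
of `c > 0` with `d(Ty, Y) ≥ c` for all `y` in the unit sphere of `Y`. -/
theorem boundedBelow_and_dist_pos_iff {X : Type*} [NormedAddCommGroup X] [NormedSpace ℂ X]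
    [CompleteSpace X] (T : X →L[ℂ] X) (Y : Submodule ℂ X) (hY : IsClosed (Y : Set X))
    (hYinf : ¬ FiniteDimensional ℂ Y) :
    ((∃ c > 0, ∀ y ∈ Y, c * ‖y‖ ≤ ‖T y‖) ∧ 0 < subspaceDist Y (Y.map (T : X →ₗ[ℂ] X))) ↔
      ∃ c > 0, ∀ y ∈ Y, ‖y‖ = 1 → c ≤ Metric.infDist (T y) (Y : Set X) := by
  have hYne : (Y : Set X).Nonempty := ⟨0, Y.zero_mem⟩
  have hbdd : BddBelow {r : ℝ | ∃ x ∈ Y, ‖x‖ = 1 ∧ ∃ y ∈ Y.map (T : X →ₗ[ℂ] X), r = ‖x - y‖} := by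
    refine ⟨0, ?_⟩
    rintro r ⟨x, _, _, y, _, rfl⟩
    exact norm_nonneg _
  constructor
  · rintro ⟨⟨c₁, hc₁, hb⟩, hd⟩
    set d := subspaceDist Y (Y.map (T : X →ₗ[ℂ] X)) with hdef
    refine ⟨min (c₁ / 2) (c₁ / 2 * d), lt_min (by positivity) (by positivity), ?_⟩
    intro y hy hy1
    refine my_le_infDist hYne fun z hz => ?_
    rw [dist_eq_norm]
    rcases lt_or_ge ‖z‖ (c₁ / 2) with h | h
    · have h1 : c₁ ≤ ‖T y‖ := by simpa [hy1] using hb y hy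
      have : c₁ / 2 ≤ ‖T y - z‖ := by
        have := norm_sub_norm_le (T y) z
        linarith [abs_le.mp (abs_norm_sub_norm_le (T y) z)]
      exact le_trans (min_le_left _ _) this
    · have hz0 : (0:ℝ) < ‖z‖ := lt_of_lt_of_le (by positivity) h
      set u := (‖z‖⁻¹ : ℂ) • z with hu_def
      have hu1 : ‖u‖ = 1 := by
        rw [hu_def, norm_smul]
        simp [abs_of_pos hz0, inv_mul_cancel₀ hz0.ne']
      have hmem : ‖u - (‖z‖⁻¹ : ℂ) • T y‖ ∈
          {r : ℝ | ∃ x ∈ Y, ‖x‖ = 1 ∧ ∃ w ∈ Y.map (T : X →ₗ[ℂ] X), r = ‖x - w‖} := by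
        refine ⟨u, Y.smul_mem _ hz, hu1, (‖z‖⁻¹ : ℂ) • T y, ?_, rfl⟩
        exact ⟨(‖z‖⁻¹ : ℂ) • y, Y.smul_mem _ hy, by simp [map_smul]⟩
      have hle : d ≤ ‖u - (‖z‖⁻¹ : ℂ) • T y‖ := csInf_le hbdd hmem
      have heq : ‖u - (‖z‖⁻¹ : ℂ) • T y‖ = ‖z‖⁻¹ * ‖T y - z‖ := by
        rw [hu_def, ← smul_sub, norm_smul]
        simp [abs_of_pos hz0, norm_sub_rev]
      have : ‖z‖ * d ≤ ‖T y - z‖ := by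
        rw [heq] at hle
        calc ‖z‖ * d ≤ ‖z‖ * (‖z‖⁻¹ * ‖T y - z‖) := by
              exact mul_le_mul_of_nonneg_left hle hz0.le
          _ = ‖T y - z‖ := by field_simp
      calc min (c₁ / 2) (c₁ / 2 * d) ≤ c₁ / 2 * d := min_le_right _ _
        _ ≤ ‖z‖ * d := mul_le_mul_of_nonneg_right h hd.le
        _ ≤ ‖T y - z‖ := this
  · rintro ⟨c, hc, h⟩
    have key : ∀ y ∈ Y, c * ‖y‖ ≤ Metric.infDist (T y) (Y : Set X) := by
      intro y hy
      rcases eq_or_ne y 0 with rfl | hy0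
      · simpa using Metric.infDist_nonneg
      · have hyn : (0:ℝ) < ‖y‖ := norm_pos_iff.mpr hy0
        set u := (‖y‖⁻¹ : ℂ) • y with hu_def
        have hu1 : ‖u‖ = 1 := by
          rw [hu_def, norm_smul]
          simp [abs_of_pos hyn, inv_mul_cancel₀ hyn.ne']
        have h1 := h u (Y.smul_mem _ hy) hu1
        refine my_le_infDist hYne fun z hz => ?_
        have h2 : c ≤ dist (T u) ((‖y‖⁻¹ : ℂ) • z) :=
          le_trans h1 (Metric.infDist_le_dist_of_mem (Y.smul_mem _ hz))
        have heq : dist (T u) ((‖y‖⁻¹ : ℂ) • z) = ‖y‖⁻¹ * dist (T y) z := by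
          rw [hu_def, map_smul, dist_eq_norm, ← smul_sub, norm_smul, dist_eq_norm]
          simp [abs_of_pos hyn]
        rw [heq] at h2
        calc c * ‖y‖ ≤ (‖y‖⁻¹ * dist (T y) z) * ‖y‖ :=
              mul_le_mul_of_nonneg_right h2 hyn.le
          _ = dist (T y) z := by field_simp
    constructor
    · refine ⟨c, hc, fun y hy => ?_⟩
      calc c * ‖y‖ ≤ Metric.infDist (T y) (Y : Set X) := key y hy
        _ ≤ dist (T y) 0 := Metric.infDist_le_dist_of_mem Y.zero_mem
        _ = ‖T y‖ := by simp
    · have hYbot : Y ≠ ⊥ := by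
        intro hbot
        exact hYinf (hbot ▸ inferInstance)
      obtain ⟨x, hx, hx0⟩ := Submodule.exists_mem_ne_zero_of_ne_bot hYbot
      have hxn : (0:ℝ) < ‖x‖ := norm_pos_iff.mpr hx0
      have hne : {r : ℝ | ∃ x ∈ Y, ‖x‖ = 1 ∧ ∃ y ∈ Y.map (T : X →ₗ[ℂ] X), r = ‖x - y‖}.Nonempty := by
        refine ⟨‖(‖x‖⁻¹ : ℂ) • x - 0‖, (‖x‖⁻¹ : ℂ) • x, Y.smul_mem _ hx, ?_, 0,
          (Y.map (T : X →ₗ[ℂ] X)).zero_mem, rfl⟩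
        rw [norm_smul]
        simp [abs_of_pos hxn, inv_mul_cancel₀ hxn.ne']
      set C := ‖T‖ + 1 with hC
      have hC0 : (0:ℝ) < C := by positivity
      have hm : (0:ℝ) < min (1/2) (c / (2 * C)) := lt_min (by norm_num) (by positivity)
      refine lt_of_lt_of_le hm (le_csInf hne ?_)
      rintro r ⟨v, hv, hv1, w, hw, rfl⟩
      obtain ⟨y, hy, rfl⟩ := Submodule.mem_map.mp hw
      rcases le_or_gt ‖y‖ (1 / (2 * C)) with hcase | hcase
      · have hTy : ‖T y‖ ≤ 1 / 2 := by
          calc ‖T y‖ ≤ ‖T‖ * ‖y‖ := T.le_opNorm y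
            _ ≤ C * (1 / (2 * C)) := by
              apply mul_le_mul (by simp [hC]) hcase (norm_nonneg _) hC0.le
            _ = 1 / 2 := by field_simp
        have : 1 / 2 ≤ ‖v - T y‖ := by
          have := norm_sub_norm_le v (T y)
          linarith [abs_le.mp (abs_norm_sub_norm_le v (T y))]
        exact le_trans (min_le_left _ _) this
      · have h1 : c * ‖y‖ ≤ ‖v - T y‖ := by
          calc c * ‖y‖ ≤ Metric.infDist (T y) (Y : Set X) := key y hy
            _ ≤ dist (T y) v := Metric.infDist_le_dist_of_mem hv
            _ = ‖v - T y‖ := by rw [dist_eq_norm, norm_sub_rev]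
        calc min (1/2) (c / (2 * C)) ≤ c / (2 * C) := min_le_right _ _
          _ = c * (1 / (2 * C)) := by ring
          _ ≤ c * ‖y‖ := mul_le_mul_of_nonneg_left hcase.le hc.le
          _ ≤ ‖v - T y‖ := h1
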